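/- Let R be a commutative ring, N an R-module, and x₁, …, x_ℓ ∈ R such that for every subset I ⊆ {1, …, ℓ}, the subsequence (x_i)_{i ∈ I} (taken in increasing order of indices) is weakly regular on N. Then the sequence (x₁·T₁, x₂·T₂, …, x_ℓ·T_ℓ) of elements of the polynomial ring R[T₁, …, T_ℓ] is weakly regular on the base-changed module N ⊗[R] R[T₁, …, T_ℓ]. -/

import Mathlib

open TensorProduct MvPolynomial
open scoped Pointwise

namespace WeakRegAux

section SpanSmul

variable {A M : Type*} [CommRing A] [AddCommGroup M] [Module A M]

theorem mem_pointwise_smul_iff {a : A} {S : Submodule A M} {z : M} :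
    z ∈ a • S ↔ ∃ n ∈ S, a • n = z := by
  rw [← SetLike.mem_coe, Submodule.coe_pointwise_smul]
  exact Set.mem_smul_set

theorem span_smul_top (s : Set A) :
    (Ideal.span s) • (⊤ : Submodule A M) = ⨆ r ∈ s, r • (⊤ : Submodule A M) := by
  apply le_antisymm
  · rw [Submodule.smul_le]
    intro r hr n _
    induction hr using Submodule.span_induction with
    | mem r hrs =>
        exact Submodule.mem_iSup_of_mem r <| Submodule.mem_iSup_of_mem hrs <|
          Submodule.smul_mem_pointwise_smul n r ⊤ trivial
    | zero => rw [zero_smul]; exact zero_mem _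
    | add u v hu hv hu' hv' => rw [add_smul]; exact add_mem hu' hv'
    | smul a u hu hu' => rw [smul_assoc]; exact Submodule.smul_mem _ a hu'
  · refine iSup₂_le fun r hr => ?_
    intro z hz
    obtain ⟨n, -, rfl⟩ := mem_pointwise_smul_iff.mp hz
    exact Submodule.smul_mem_smul (Ideal.subset_span hr) trivial

theorem biSup_smul_top_induction {ι : Type*} (t : Set ι) (g : ι → A) {C : M → Prop} {z : M}
    (hz : z ∈ ⨆ j ∈ t, g j • (⊤ : Submodule A M))
    (mem : ∀ j ∈ t, ∀ w : M, C (g j • w)) (zero : C 0)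
    (add : ∀ u v, C u → C v → C (u + v)) : C z := by
  refine Submodule.iSup_induction _ (motive := C) hz (fun j w hw => ?_) zero add
  by_cases h : j ∈ t
  · rw [iSup_pos h] at hw
    obtain ⟨n, -, rfl⟩ := mem_pointwise_smul_iff.mp hw
    exact mem j h n
  · rw [iSup_neg h] at hw
    rw [(Submodule.mem_bot A).mp hw]
    exact zero

end SpanSmul

theorem sort_insert_max {α : Type*} [LinearOrder α] [DecidableEq α] {s : Finset α} {a : α}
    (h : ∀ b ∈ s, b < a) :
    (insert a s).sort (· ≤ ·) = s.sort (· ≤ ·) ++ [a] := by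
  have ha : a ∉ s := fun hmem => lt_irrefl a (h a hmem)
  refine (fun hp hs => List.Perm.eq_of_pairwise' (Finset.pairwise_sort _ _) hs hp) ?_ ?_
  · refine (Finset.sort_perm_toList _ _).trans ?_
    refine (Finset.toList_insert ha).trans ?_
    refine List.Perm.trans ?_ (List.perm_append_singleton a _).symm
    exact List.Perm.cons a (Finset.sort_perm_toList _ _).symm
  · show List.Pairwise _ _
    rw [List.pairwise_append]
    refine ⟨Finset.pairwise_sort _ _, List.pairwise_singleton _ a, ?_⟩
    intro b hb c hc
    rw [List.mem_singleton] at hc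
    subst hc
    exact le_of_lt (h b (Finset.mem_sort (α := α) (· ≤ ·) |>.mp hb))

theorem ofList_take_ofFn {A : Type*} [CommRing A] {ℓ : ℕ} (y : Fin ℓ → A) (k : ℕ) :
    Ideal.ofList ((List.ofFn y).take k) = Ideal.span (y '' {j : Fin ℓ | (j : ℕ) < k}) := by
  unfold Ideal.ofList
  congr 1
  ext r
  constructor
  · intro hr
    obtain ⟨i, hi, hr⟩ := List.mem_iff_getElem.mp hr
    have hi' : i < min k (List.ofFn y).length := by simpa using hi
    rw [List.length_ofFn] at hi'
    rw [List.getElem_take, List.getElem_ofFn] at hr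
    exact ⟨⟨i, (lt_min_iff.mp hi').2⟩, (lt_min_iff.mp hi').1, hr⟩
  · rintro ⟨j, hj, rfl⟩
    refine List.mem_iff_getElem.mpr ⟨j.1, ?_, ?_⟩
    · have hj' : (j : ℕ) < k := hj
      simp only [List.length_take, List.length_ofFn, lt_min_iff]
      exact ⟨hj', j.2⟩
    · rw [List.getElem_take, List.getElem_ofFn]

variable {R N : Type*} [CommRing R] [AddCommGroup N] [Module R N] {ℓ : ℕ}

/-- The standard equivalence `R[T] ⊗ N ≃ ((Fin ℓ →₀ ℕ) →₀ N)`. -/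
noncomputable def ee (R N : Type*) [CommRing R] [AddCommGroup N] [Module R N] (ℓ : ℕ) :
    (MvPolynomial (Fin ℓ) R ⊗[R] N) ≃ₗ[R] ((Fin ℓ →₀ ℕ) →₀ N) :=
  (TensorProduct.congr (MvPolynomial.basisMonomials (Fin ℓ) R).repr (LinearEquiv.refl R N)) ≪≫ₗ
    TensorProduct.finsuppScalarLeft R N _

lemma ee_tmul (m : Fin ℓ →₀ ℕ) (r : R) (n : N) :
    ee R N ℓ ((monomial m r) ⊗ₜ[R] n) = Finsupp.single m (r • n) := by
  have hrepr : (MvPolynomial.basisMonomials (Fin ℓ) R).repr (monomial m r) =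
      Finsupp.single m r := by
    have : (monomial m r : MvPolynomial (Fin ℓ) R) =
        r • (MvPolynomial.basisMonomials (Fin ℓ) R) m := by
      rw [MvPolynomial.coe_basisMonomials]
      simp [MvPolynomial.smul_monomial]
    rw [this, map_smul, Module.Basis.repr_self, Finsupp.smul_single, smul_eq_mul, mul_one]
  simp only [ee, LinearEquiv.trans_apply, TensorProduct.congr_tmul, LinearEquiv.refl_apply, hrepr]
  ext i
  rw [TensorProduct.finsuppScalarLeft_apply_tmul_apply]
  by_cases h : m = i
  · subst h; simp
  · simp [Finsupp.single_apply, h]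

variable (x : Fin ℓ → R)

/-- Multiplication by `C (x i) * X i` on the Finsupp side. -/
noncomputable def phi (i : Fin ℓ) : ((Fin ℓ →₀ ℕ) →₀ N) →ₗ[R] ((Fin ℓ →₀ ℕ) →₀ N) :=
  (Finsupp.lmapDomain N R (· + Finsupp.single i 1)) ∘ₗ (x i • LinearMap.id)

lemma add_single_injective (i : Fin ℓ) :
    Function.Injective (· + Finsupp.single i (1:ℕ) : (Fin ℓ →₀ ℕ) → (Fin ℓ →₀ ℕ)) :=
  fun _ _ h => add_right_cancel h

lemma phi_single (i : Fin ℓ) (m : Fin ℓ →₀ ℕ) (n : N) :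
    phi x i (Finsupp.single m n) = Finsupp.single (m + Finsupp.single i 1) (x i • n) := by
  simp [phi, Finsupp.smul_single, Finsupp.mapDomain_single]

lemma phi_apply_shift (i : Fin ℓ) (f : (Fin ℓ →₀ ℕ) →₀ N) (m : Fin ℓ →₀ ℕ) :
    phi x i f (m + Finsupp.single i 1) = x i • f m := by
  simp only [phi, LinearMap.comp_apply, Finsupp.lmapDomain_apply]
  refine (Finsupp.mapDomain_apply (add_single_injective i) _ m).trans ?_
  simp

lemma phi_apply_of_eq_zero (i : Fin ℓ) (f : (Fin ℓ →₀ ℕ) →₀ N) (m : Fin ℓ →₀ ℕ)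
    (h : m i = 0) : phi x i f m = 0 := by
  simp only [phi, LinearMap.comp_apply]
  apply Finsupp.mapDomain_notin_range
  rintro ⟨m', hm'⟩
  have h2 : m' + Finsupp.single i 1 = m := hm'
  rw [← h2, Finsupp.add_apply, Finsupp.single_apply] at h
  simp at h

lemma sub_add_single_cancel {i : Fin ℓ} {m : Fin ℓ →₀ ℕ} (h : m i ≠ 0) :
    m - Finsupp.single i 1 + Finsupp.single i 1 = m := by
  apply tsub_add_cancel_of_le
  rw [Finsupp.single_le_iff]
  exact Nat.one_le_iff_ne_zero.mpr h

/-- Key computation: `ee` intertwines multiplication by `C (x i) * X i` with `phi i`. -/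
lemma ee_smul (i : Fin ℓ) (z : MvPolynomial (Fin ℓ) R ⊗[R] N) :
    ee R N ℓ ((MvPolynomial.C (x i) * MvPolynomial.X i) • z) = phi x i (ee R N ℓ z) := by
  set y : MvPolynomial (Fin ℓ) R := MvPolynomial.C (x i) * MvPolynomial.X i
  have key : (ee R N ℓ).toLinearMap ∘ₗ
        ((LinearMap.lsmul (MvPolynomial (Fin ℓ) R) (MvPolynomial (Fin ℓ) R ⊗[R] N) y).restrictScalars R) =
      (phi x i) ∘ₗ (ee R N ℓ).toLinearMap := by
    apply TensorProduct.ext'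
    intro p n
    simp only [LinearMap.comp_apply, LinearMap.restrictScalars_apply, LinearMap.lsmul_apply,
      LinearEquiv.coe_coe]
    induction p using MvPolynomial.induction_on' with
    | monomial m r =>
        rw [TensorProduct.smul_tmul', smul_eq_mul]
        have : y * monomial m r = monomial (m + Finsupp.single i 1) (x i * r) := by
          rw [show y = monomial (Finsupp.single i 1) (x i) by
            simp [y, MvPolynomial.X, MvPolynomial.monomial_mul, MvPolynomial.C_mul_monomial]]
          rw [MvPolynomial.monomial_mul, add_comm]
        rw [this, ee_tmul, ee_tmul, phi_single, smul_smul]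
    | add p q hp hq =>
        rw [TensorProduct.add_tmul, smul_add, map_add, map_add, map_add, hp, hq]
  exact LinearMap.congr_fun key z

def Jset (k : ℕ) (m : Fin ℓ →₀ ℕ) : Set (Fin ℓ) := {j | (j : ℕ) < k ∧ m j ≠ 0}

noncomputable def QN (s : Set (Fin ℓ)) : Submodule R N :=
  Ideal.span (x '' s) • (⊤ : Submodule R N)

lemma QN_eq (s : Set (Fin ℓ)) :
    (QN x s : Submodule R N) = ⨆ j ∈ s, x j • (⊤ : Submodule R N) := by
  rw [QN, span_smul_top, iSup_image]

def SubF (k : ℕ) : Submodule R ((Fin ℓ →₀ ℕ) →₀ N) where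
  carrier := {f | ∀ m, f m ∈ QN x (Jset k m)}
  add_mem' := fun hf hg m => by rw [Finsupp.add_apply]; exact add_mem (hf m) (hg m)
  zero_mem' := fun m => by rw [Finsupp.zero_apply]; exact zero_mem _
  smul_mem' := fun r f hf m => by rw [Finsupp.smul_apply]; exact Submodule.smul_mem _ r (hf m)

lemma mem_SubF {k : ℕ} {f : (Fin ℓ →₀ ℕ) →₀ N} :
    f ∈ SubF x k ↔ ∀ m, f m ∈ QN x (Jset k m) := Iff.rfl

/-- The submodule `(y₁, …, y_k) • ⊤` of the tensor product. -/
noncomputable def PP (k : ℕ) : Submodule (MvPolynomial (Fin ℓ) R) (MvPolynomial (Fin ℓ) R ⊗[R] N) :=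
  Ideal.span ((fun j => MvPolynomial.C (x j) * MvPolynomial.X j) '' {j : Fin ℓ | (j : ℕ) < k}) •
    (⊤ : Submodule (MvPolynomial (Fin ℓ) R) (MvPolynomial (Fin ℓ) R ⊗[R] N))

lemma mem_PP_iff (k : ℕ) (z : MvPolynomial (Fin ℓ) R ⊗[R] N) :
    z ∈ PP x k ↔ ee R N ℓ z ∈ SubF x k := by
  constructor
  · intro hz
    rw [PP, span_smul_top, iSup_image] at hz
    refine biSup_smul_top_induction (C := fun z => ee R N ℓ z ∈ SubF x k) _ _ hz ?_ ?_ ?_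
    · intro j hj w
      rw [mem_SubF, ee_smul]
      intro m
      by_cases hm : m j = 0
      · rw [phi_apply_of_eq_zero x j _ m hm]; exact zero_mem _
      · have hmm : m = (m - Finsupp.single j 1) + Finsupp.single j 1 :=
          (sub_add_single_cancel hm).symm
        rw [hmm, phi_apply_shift]
        refine Submodule.smul_mem_smul (Ideal.subset_span ⟨j, ⟨hj, ?_⟩, rfl⟩) trivial
        rw [Finsupp.add_apply, Finsupp.single_eq_same]
        exact Nat.succ_ne_zero _
    · show ee R N ℓ (0 : MvPolynomial (Fin ℓ) R ⊗[R] N) ∈ SubF x k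
      rw [map_zero]; exact zero_mem _
    · intro u v hu hv
      show ee R N ℓ (u + v) ∈ SubF x k
      rw [map_add]; exact add_mem hu hv
  · intro hz
    have main : ∀ f : (Fin ℓ →₀ ℕ) →₀ N, f ∈ SubF x k → (ee R N ℓ).symm f ∈ PP x k := by
      intro f
      induction f using Finsupp.induction with
      | zero => intro _; rw [map_zero]; exact zero_mem _
      | single_add a b f ha hb ih =>
        intro hf
        rw [mem_SubF] at hf
        have hfa : f a = 0 := Finsupp.notMem_support_iff.mp ha
        have hfmem : f ∈ SubF x k := by
          rw [mem_SubF]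
          intro m
          by_cases hma : m = a
          · subst hma; rw [hfa]; exact zero_mem _
          · have := hf m
            rwa [Finsupp.add_apply, Finsupp.single_apply,
              if_neg (fun h => hma h.symm), zero_add] at this
        have hbmem : b ∈ QN x (Jset k a) := by
          have := hf a
          rwa [Finsupp.add_apply, Finsupp.single_eq_same, hfa, add_zero] at this
        rw [map_add]
        refine add_mem ?_ (ih hfmem)
        -- single a b case
        rw [QN_eq] at hbmem
        refine biSup_smul_top_induction
          (C := fun n => (ee R N ℓ).symm (Finsupp.single a n) ∈ PP x k) _ _ hbmem ?_ ?_ ?_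
        · intro j hj w
          obtain ⟨hjk, hja⟩ := hj
          set w' := (ee R N ℓ).symm (Finsupp.single (a - Finsupp.single j 1) w) with hw'
          have h1 : Finsupp.single a (x j • w) =
              ee R N ℓ ((MvPolynomial.C (x j) * MvPolynomial.X j) • w') := by
            rw [ee_smul, hw', LinearEquiv.apply_symm_apply, phi_single,
              sub_add_single_cancel hja]
          rw [h1, LinearEquiv.symm_apply_apply]
          exact Submodule.smul_mem_smul (Ideal.subset_span ⟨j, hjk, rfl⟩) trivial
        · show ((ee R N ℓ).symm (Finsupp.single a (0 : N))) ∈ PP x k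
          rw [Finsupp.single_zero, map_zero]; exact zero_mem _
        · intro u v hu hv
          show ((ee R N ℓ).symm (Finsupp.single a (u + v))) ∈ PP x k
          rw [Finsupp.single_add, map_add]
          exact add_mem hu hv
    have := main (ee R N ℓ z) hz
    rwa [LinearEquiv.symm_apply_apply] at this

end WeakRegAux

open WeakRegAux

theorem isWeaklyRegular_smul_var_tensor {R N : Type*} [CommRing R]
    [AddCommGroup N] [Module R N] (ℓ : ℕ) (x : Fin ℓ → R)
    (hx : ∀ s : Finset (Fin ℓ),
      RingTheory.Sequence.IsWeaklyRegular N ((s.sort (· ≤ ·)).map x)) :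
    RingTheory.Sequence.IsWeaklyRegular
      ((MvPolynomial (Fin ℓ) R) ⊗[R] N)
      (List.ofFn fun i : Fin ℓ => MvPolynomial.C (x i) * MvPolynomial.X i) := by
  set S := MvPolynomial (Fin ℓ) R
  set y : Fin ℓ → S := fun i => MvPolynomial.C (x i) * MvPolynomial.X i with hy
  rw [RingTheory.Sequence.isWeaklyRegular_iff]
  intro i hi
  rw [List.length_ofFn] at hi
  set ι : Fin ℓ := ⟨i, hi⟩ with hι
  -- rewrite the submodule and the element
  have hP : Ideal.ofList ((List.ofFn y).take i) •
        (⊤ : Submodule S (S ⊗[R] N)) = PP x i := by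
    rw [ofList_take_ofFn, PP]
  have hget : (List.ofFn y)[i]'(by simpa using hi) = y ι := by
    simp [List.getElem_ofFn, hι]
  -- the core statement
  have core : ∀ z : S ⊗[R] N, y ι • z ∈ PP x i → z ∈ PP x i := by
    intro z hz
    rw [mem_PP_iff] at hz ⊢
    rw [hy] at hz
    rw [ee_smul] at hz
    rw [mem_SubF] at hz ⊢
    intro m
    have hshift := hz (m + Finsupp.single ι 1)
    rw [phi_apply_shift] at hshift
    -- Jset doesn't change when adding e_ι
    have hJ : Jset (ℓ := ℓ) i (m + Finsupp.single ι 1) = Jset i m := by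
      ext j
      simp only [Jset, Set.mem_setOf_eq]
      refine and_congr_right fun hj => ?_
      have hne : ι ≠ j := by
        intro h
        rw [← h] at hj
        exact lt_irrefl i hj
      rw [Finsupp.add_apply, Finsupp.single_apply, if_neg hne, add_zero]
    rw [hJ] at hshift
    -- now use regularity of x ι on N ⧸ QN x (Jset i m)
    set s' : Finset (Fin ℓ) := Finset.univ.filter (fun j => (j : ℕ) < i ∧ m j ≠ 0) with hs'
    have hcoe : (↑s' : Set (Fin ℓ)) = Jset i m := by
      ext j; simp [hs', Jset]
    have hlt : ∀ b ∈ s', b < ι := by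
      intro b hb
      rw [hs', Finset.mem_filter] at hb
      exact Fin.lt_def.mpr hb.2.1
    have hsort : (insert ι s').sort (· ≤ ·) = s'.sort (· ≤ ·) ++ [ι] :=
      sort_insert_max hlt
    have hreg0 := hx (insert ι s')
    rw [hsort, List.map_append, List.map_singleton] at hreg0
    set L1 : List R := (s'.sort (· ≤ ·)).map x with hL1
    have hlen : L1.length < (L1 ++ [x ι]).length := by
      rw [List.length_append]; simp
    have hreg1 := hreg0.regular_mod_prev L1.length hlen
    have htake : (L1 ++ [x ι]).take L1.length = L1 := List.take_left
    have hgetL : (L1 ++ [x ι])[L1.length]'hlen = x ι := by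
      rw [List.getElem_append_right (le_refl _)]
      simp
    rw [htake, hgetL] at hreg1
    have hofL : Ideal.ofList L1 = Ideal.span (x '' Jset i m) := by
      unfold Ideal.ofList
      congr 1
      ext r
      simp only [hL1, List.mem_map, Set.mem_image]
      constructor
      · rintro ⟨j, hj, rfl⟩
        exact ⟨j, by rw [← hcoe]; exact Finset.mem_sort (α := Fin ℓ) (· ≤ ·) |>.mp hj, rfl⟩
      · rintro ⟨j, hj, rfl⟩
        refine ⟨j, Finset.mem_sort (α := Fin ℓ) (· ≤ ·) |>.mpr ?_, rfl⟩
        rw [← hcoe] at hj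
        exact hj
    have hQN : Ideal.ofList L1 • (⊤ : Submodule R N) = QN x (Jset i m) := by
      rw [hofL, QN]
    rw [hQN] at hreg1
    -- conclude
    have h0 : x ι • Submodule.Quotient.mk (p := QN x (Jset i m)) ((ee R N ℓ z) m) =
        x ι • (0 : N ⧸ QN x (Jset i m)) := by
      rw [smul_zero, ← Submodule.Quotient.mk_smul, Submodule.Quotient.mk_eq_zero]
      exact hshift
    have := hreg1 h0
    rwa [Submodule.Quotient.mk_eq_zero] at this
  -- deduce injectivity on the quotient
  rw [hP, hget]
  intro a b hab
  obtain ⟨za, rfl⟩ := Submodule.Quotient.mk_surjective _ a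
  obtain ⟨zb, rfl⟩ := Submodule.Quotient.mk_surjective _ b
  replace hab : y ι • (Submodule.Quotient.mk za : _ ⧸ PP x i) =
      y ι • (Submodule.Quotient.mk zb) := hab
  rw [← Submodule.Quotient.mk_smul, ← Submodule.Quotient.mk_smul,
    Submodule.Quotient.eq] at hab
  rw [← smul_sub] at hab
  exact Submodule.Quotient.eq _ |>.mpr (core _ hab)
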